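/- Let Ω ⊆ ℝⁿ be open, let φ : Ω → ℝ and v : Ω → ℝ both be differentiable with locally Lipschitz gradients (φ, v ∈ C^{1,1}_loc(Ω)), with v ≥ 0 on Ω, and assume Δ(v + φ)(x) = 0 for almost every x ∈ {v > 0}. Then v satisfies Δv = (−Δφ) χ_{{v>0}} almost everywhere in Ω: for a.e. x ∈ Ω, Δv(x) = −Δφ(x) if v(x) > 0 and Δv(x) = 0 if v(x) = 0. -/

import Mathlib

open MeasureTheory Filter Metric Set
open scoped NNReal ENNReal Topology

noncomputable section

/-- The (pointwise a.e. defined) Laplacian of a `C^{1,1}_loc` function, as the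
trace of the derivative of the gradient. -/
def lapGrad {n : ℕ} (w : EuclideanSpace ℝ (Fin n) → ℝ)
    (x : EuclideanSpace ℝ (Fin n)) : ℝ :=
  ∑ i : Fin n, fderiv ℝ (gradient w) x (EuclideanSpace.single i 1) i

/-- Local Lipschitz continuity on an open set implies a.e. differentiability there
(Rademacher). -/
theorem ae_diffAt_of_locLip {n : ℕ} {Ω : Set (EuclideanSpace ℝ (Fin n))}
    (hΩopen : IsOpen Ω) (g : EuclideanSpace ℝ (Fin n) → EuclideanSpace ℝ (Fin n))
    (hlip : ∀ K : Set (EuclideanSpace ℝ (Fin n)), K ⊆ Ω → IsCompact K →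
      ∃ L : ℝ≥0, LipschitzOnWith L g K) :
    ∀ᵐ x, x ∈ Ω → DifferentiableAt ℝ g x := by
  rw [ae_iff]
  have hset : {x | ¬(x ∈ Ω → DifferentiableAt ℝ g x)}
      = {x ∈ Ω | ¬ DifferentiableAt ℝ g x} := by ext x; simp [Classical.not_imp]
  rw [hset]
  apply measure_null_of_locally_null
  intro x hx
  obtain ⟨r, hr, hball⟩ := Metric.isOpen_iff.1 hΩopen x hx.1
  have hr2 : (0:ℝ) < r/2 := by linarith
  have hcb : closedBall x (r/2) ⊆ Ω := fun y hy =>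
    hball (lt_of_le_of_lt (mem_closedBall.1 hy) (by linarith))
  obtain ⟨L, hL⟩ := hlip (closedBall x (r/2)) hcb (isCompact_closedBall _ _)
  refine ⟨{x ∈ Ω | ¬ DifferentiableAt ℝ g x} ∩ ball x (r/2),
    inter_mem_nhdsWithin _ (ball_mem_nhds x hr2), ?_⟩
  have hae := hL.ae_differentiableWithinAt_of_mem (μ := volume)
  refine measure_mono_null (fun y hy => ?_) (ae_iff.1 hae)
  simp only [mem_inter_iff, mem_setOf_eq] at hy ⊢
  intro h
  exact hy.1.2 ((h (ball_subset_closedBall hy.2)).differentiableAt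
    (Filter.mem_of_superset (isOpen_ball.mem_nhds hy.2) ball_subset_closedBall))

/-- if `φ, v ∈ C^{1,1}_loc(Ω)` with `v ≥ 0` on `Ω` and
`Δ(v + φ) = 0` a.e. on `{v > 0}`, then `Δv = (-Δφ) χ_{{v>0}}` a.e. in `Ω`:
for a.e. `x ∈ Ω`, `Δv(x) = -Δφ(x)` where `v(x) > 0`, and `Δv(x) = 0` where
`v(x) = 0`. -/
theorem laplacian_is_characteristic_function
    {n : ℕ} (Ω : Set (EuclideanSpace ℝ (Fin n))) (hΩopen : IsOpen Ω)
    (φ v : EuclideanSpace ℝ (Fin n) → ℝ)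
    (hφdiff : ∀ x ∈ Ω, DifferentiableAt ℝ φ x)
    (hφlip : ∀ K : Set (EuclideanSpace ℝ (Fin n)), K ⊆ Ω → IsCompact K →
      ∃ L : ℝ≥0, LipschitzOnWith L (gradient φ) K)
    (hvdiff : ∀ x ∈ Ω, DifferentiableAt ℝ v x)
    (hvlip : ∀ K : Set (EuclideanSpace ℝ (Fin n)), K ⊆ Ω → IsCompact K →
      ∃ L : ℝ≥0, LipschitzOnWith L (gradient v) K)
    (hvnonneg : ∀ x ∈ Ω, 0 ≤ v x)
    (hharm : ∀ᵐ x ∂(volume.restrict {x ∈ Ω | 0 < v x}),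
      lapGrad (fun y => v y + φ y) x = 0) :
    ∀ᵐ x ∂(volume.restrict Ω),
      (0 < v x → lapGrad v x = -lapGrad φ x) ∧
      (v x = 0 → lapGrad v x = 0) := by
  -- the positivity set is open
  have hvcont : ContinuousOn v Ω := fun x hx => (hvdiff x hx).continuousAt.continuousWithinAt
  have hs₁eq : {x ∈ Ω | 0 < v x} = Ω ∩ v ⁻¹' (Set.Ioi 0) := by ext x; simp [Set.mem_setOf_eq, Set.mem_inter_iff, Set.mem_preimage, Set.mem_Ioi]
  have hs₁open : IsOpen {x ∈ Ω | 0 < v x} := by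
    rw [hs₁eq]; exact hvcont.isOpen_inter_preimage hΩopen isOpen_Ioi
  -- gradients are a.e. differentiable
  have hDg := ae_diffAt_of_locLip hΩopen (gradient v) hvlip
  have hDh := ae_diffAt_of_locLip hΩopen (gradient φ) hφlip
  -- gradient of the sum equals sum of gradients on Ω
  have hgradsum : Set.EqOn (gradient (fun y => v y + φ y))
      (fun y => gradient v y + gradient φ y) Ω := by
    intro y hy
    simp only [gradient, fderiv_fun_add (hvdiff y hy) (hφdiff y hy), map_add]
  -- splitting of the Laplacian at differentiability points of the gradients, within Ω
  have hsplit : ∀ x ∈ Ω, DifferentiableAt ℝ (gradient v) x → DifferentiableAt ℝ (gradient φ) x →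
      lapGrad (fun y => v y + φ y) x = lapGrad v x + lapGrad φ x := by
    intro x hx hg hh
    have hfe : gradient (fun y => v y + φ y) =ᶠ[𝓝 x]
        fun y => gradient v y + gradient φ y :=
      hgradsum.eventuallyEq_of_mem (hΩopen.mem_nhds hx)
    have hG : fderiv ℝ (gradient (fun y => v y + φ y)) x
        = fderiv ℝ (gradient v) x + fderiv ℝ (gradient φ) x := by
      rw [hfe.fderiv_eq, fderiv_fun_add hg hh]
    simp only [lapGrad, hG, ContinuousLinearMap.add_apply, PiLp.add_apply,
      Finset.sum_add_distrib]
  -- harmonicity translated to an implication a.e.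
  have hharm' : ∀ᵐ x, x ∈ {x ∈ Ω | 0 < v x} → lapGrad (fun y => v y + φ y) x = 0 :=
    (ae_restrict_iff' hs₁open.measurableSet).1 hharm
  -- the zero set: gradient v vanishes there
  have hB : ∀ x ∈ Ω, v x = 0 → gradient v x = 0 := by
    intro x hx hvx
    have hmin : IsLocalMin v x := by
      filter_upwards [hΩopen.mem_nhds hx] with y hy
      rw [hvx]; exact hvnonneg y hy
    simp only [gradient, hmin.fderiv_eq_zero, map_zero]
  -- a.e. on the zero set, the derivative of the gradient vanishes
  set B : Set (EuclideanSpace ℝ (Fin n)) := {x ∈ Ω | v x = 0} with hBdef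
  have hBeq : B = Ω \ {x ∈ Ω | 0 < v x} := by
    ext x
    simp only [hBdef, Set.mem_setOf_eq, Set.mem_diff, not_and]
    constructor
    · rintro ⟨hx, h0⟩; exact ⟨hx, fun _ h => absurd h0 h.ne'⟩
    · rintro ⟨hx, h⟩; exact ⟨hx, le_antisymm (not_lt.1 (fun hc => (h hx) hc)) (hvnonneg x hx)⟩
  have hBmeas : MeasurableSet B := by
    rw [hBeq]; exact hΩopen.measurableSet.diff hs₁open.measurableSet
  set s' : Set (EuclideanSpace ℝ (Fin n)) := B ∩ {x | DifferentiableAt ℝ (gradient v) x} with hs'def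
  have hs'meas : MeasurableSet s' := hBmeas.inter (measurableSet_of_differentiableAt ℝ _)
  have happrox : ApproximatesLinearOn (gradient v) (0 : EuclideanSpace ℝ (Fin n) →L[ℝ] EuclideanSpace ℝ (Fin n)) s' 0 := by
    intro x hx y hy
    rw [hB x hx.1.1 hx.1.2, hB y hy.1.1 hy.1.2]
    simp
  have hfz : ∀ᵐ x, x ∈ s' → fderiv ℝ (gradient v) x = 0 := by
    have := happrox.norm_fderiv_sub_le (μ := volume) hs'meas
      (fun x => fderiv ℝ (gradient v) x)
      (fun x hx => hx.2.hasFDerivAt.hasFDerivWithinAt)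
    rw [ae_restrict_iff' hs'meas] at this
    filter_upwards [this] with x hx hxs
    have h0 := le_antisymm (hx hxs) zero_le
    rw [nnnorm_eq_zero, sub_zero] at h0
    exact h0
  -- assemble
  rw [ae_restrict_iff' hΩopen.measurableSet]
  filter_upwards [hDg, hDh, hharm', hfz] with x hg hh hhar hz hx
  constructor
  · intro hpos
    have h1 := hhar ⟨hx, hpos⟩
    have h2 := hsplit x hx (hg hx) (hh hx)
    rw [h2] at h1
    linarith
  · intro hvx
    have hx' : x ∈ s' := ⟨⟨hx, hvx⟩, hg hx⟩
    have h0 := hz hx'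
    simp [lapGrad, h0]
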